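/- If T is a bounded Hilbert space operator with T*² − 2T*T + T² = 0, then TT* ≤ T*T, i.e., T is hyponormal. -/

import Mathlib

open ContinuousLinearMap

set_option maxHeartbeats 2000000 in
theorem stmt7 {H : Type*} [NormedAddCommGroup H] [InnerProductSpace ℂ H] [CompleteSpace H]
    (T : H →L[ℂ] H)
    (hT : adjoint T * adjoint T - (2 : ℂ) • (adjoint T * T) + T * T = 0) :
    (adjoint T * T - T * adjoint T).IsPositive := by
  obtain ⟨S, hS⟩ : ∃ S, S = adjoint T := ⟨_, rfl⟩
  rw [← hS] at hT
  -- key identity: S*S + T*T = S*T + S*T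
  have hT' : S * S + T * T = S * T + S * T := by
    apply eq_of_sub_eq_zero
    rw [two_smul] at hT
    rw [← hT]; noncomm_ring
  obtain ⟨B, hB⟩ : ∃ B, B = T - S := ⟨_, rfl⟩
  obtain ⟨C, hC⟩ : ∃ C, C = T + S := ⟨_, rfl⟩
  -- B^2 = S*T - T*S
  have hB2 : B ^ 2 = S * T - T * S := by
    have h : B ^ 2 - (S * T - T * S) = (S * S + T * T) - (S * T + S * T) := by
      rw [hB]; noncomm_ring
    rw [hT', sub_self] at h
    exact sub_eq_zero.mp h
  -- commutator relation: C*B = B*C + 2 B^2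
  have hc : C * B = B * C + (B ^ 2 + B ^ 2) := by
    apply eq_of_sub_eq_zero
    have h : C * B - (B * C + (B ^ 2 + B ^ 2)) =
        ((S * T + S * T) - (S * S + T * T)) + ((S * T + S * T) - (S * S + T * T)) := by
      rw [hB, hC]; noncomm_ring
    rw [h, hT', sub_self, add_zero]
  -- star of B
  have hstarB : star B = -B := by
    rw [hB, star_sub, star_eq_adjoint, star_eq_adjoint, hS, adjoint_adjoint, neg_sub]
  -- iterated commutator
  have hkey : ∀ n : ℕ, C * B ^ n = B ^ n * C + ((2 * n : ℝ)) • B ^ (n + 1) := by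
    intro n
    induction n with
    | zero => simp
    | succ n ih =>
      have e4 : B ^ n * (C * B) = B ^ (n + 1) * C + (B ^ (n + 2) + B ^ (n + 2)) := by
        rw [hc, mul_add, ← mul_assoc, ← pow_succ, mul_add, ← pow_add]
      calc C * B ^ (n + 1) = (C * B ^ n) * B := by rw [mul_assoc, ← pow_succ]
        _ = (B ^ n * C) * B + (2 * n : ℝ) • (B ^ (n + 1) * B) := by
            rw [ih, add_mul, smul_mul_assoc]
        _ = B ^ n * (C * B) + (2 * n : ℝ) • B ^ (n + 2) := by
            rw [mul_assoc, ← pow_succ]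
        _ = B ^ (n + 1) * C + (B ^ (n + 2) + B ^ (n + 2)) + (2 * n : ℝ) • B ^ (n + 2) := by
            rw [e4]
        _ = B ^ (n + 1) * C + (2 * ((n : ℝ) + 1)) • B ^ (n + 2) := by
            have : (2 * ((n : ℝ) + 1)) • B ^ (n + 2)
                = (2 * n : ℝ) • B ^ (n + 2) + ((1:ℝ) • B ^ (n + 2) + (1:ℝ) • B ^ (n + 2)) := by
              rw [← add_smul, ← add_smul]; ring_nf
            rw [this, one_smul]; abel
        _ = B ^ (n + 1) * C + (2 * ((n:ℕ) + 1 : ℕ) : ℝ) • B ^ (n + 1 + 1) := by push_cast; ring_nf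
  -- norm bound: ‖B^(n+1)‖ * n! ≤ ‖C‖^n * ‖B‖
  have hbound : ∀ n : ℕ, ‖B ^ (n + 1)‖ * (Nat.factorial n : ℝ) ≤ ‖C‖ ^ n * ‖B‖ := by
    intro n
    induction n with
    | zero => simp
    | succ n ih =>
      have hkn := hkey (n + 1)
      have hlhs : ((2 * ((n:ℕ) + 1 : ℕ) : ℝ)) • B ^ (n + 2) = C * B ^ (n+1) - B ^ (n+1) * C := by
        rw [hkn]; abel
      have h1 : ‖((2 * ((n:ℕ) + 1 : ℕ) : ℝ)) • B ^ (n + 2)‖ ≤ ‖C * B ^ (n+1)‖ + ‖B ^ (n+1) * C‖ := by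
        rw [hlhs]; exact norm_sub_le _ _
      have h2 : ‖((2 * ((n:ℕ) + 1 : ℕ) : ℝ)) • B ^ (n + 2)‖ = (2 * ((n:ℝ) + 1)) * ‖B ^ (n + 2)‖ := by
        rw [norm_smul]
        rw [Real.norm_eq_abs, abs_of_nonneg (by positivity)]
        push_cast; ring_nf
      rw [h2] at h1
      have hnorm : (2 * ((n:ℝ) + 1)) * ‖B ^ (n + 2)‖ ≤ 2 * (‖C‖ * ‖B ^ (n+1)‖) :=
        calc (2 * ((n:ℝ) + 1)) * ‖B ^ (n + 2)‖ ≤ ‖C * B ^ (n+1)‖ + ‖B ^ (n+1) * C‖ := h1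
          _ ≤ ‖C‖ * ‖B ^ (n+1)‖ + ‖B ^ (n+1)‖ * ‖C‖ := by
              gcongr <;> [exact norm_mul_le _ _; exact norm_mul_le _ _]
          _ = 2 * (‖C‖ * ‖B ^ (n+1)‖) := by ring
      have hstep : ((n:ℝ) + 1) * ‖B ^ (n + 2)‖ ≤ ‖C‖ * ‖B ^ (n+1)‖ := by
        nlinarith [norm_nonneg (B ^ (n+2)), norm_nonneg (B ^ (n+1)), norm_nonneg C]
      have hfact : (Nat.factorial (n+1) : ℝ) = ((n:ℝ) + 1) * (Nat.factorial n : ℝ) := by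
        rw [Nat.factorial_succ]; push_cast; ring
      calc ‖B ^ (n + 1 + 1)‖ * (Nat.factorial (n+1) : ℝ)
          = (((n:ℝ) + 1) * ‖B ^ (n + 2)‖) * (Nat.factorial n : ℝ) := by rw [hfact]; ring_nf
        _ ≤ (‖C‖ * ‖B ^ (n+1)‖) * (Nat.factorial n : ℝ) := by
            gcongr
        _ = ‖C‖ * (‖B ^ (n+1)‖ * (Nat.factorial n : ℝ)) := by ring
        _ ≤ ‖C‖ * (‖C‖ ^ n * ‖B‖) := by gcongr
        _ = ‖C‖ ^ (n+1) * ‖B‖ := by ring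
  -- norm of powers of B
  have hB2sa : IsSelfAdjoint (B ^ 2) := by
    rw [IsSelfAdjoint, star_pow, hstarB]; noncomm_ring
  have hnB2 : ‖B ^ 2‖ = ‖B‖ ^ 2 := by
    have h : B ^ 2 = -(star B * B) := by rw [hstarB]; noncomm_ring
    rw [h, norm_neg, CStarRing.norm_star_mul_self, sq]
  have hpow : ∀ k : ℕ, ‖B ^ (2 ^ (k + 1))‖ = ‖B‖ ^ (2 ^ (k + 1)) := by
    intro k
    have h1 : ‖(B ^ 2) ^ (2 ^ k)‖₊ = ‖B ^ 2‖₊ ^ (2 ^ k) := hB2sa.nnnorm_pow_two_pow k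
    have h2 : ‖(B ^ 2) ^ (2 ^ k)‖ = ‖B ^ 2‖ ^ (2 ^ k) := by
      have h3 := congrArg (fun x : NNReal => (x : ℝ)) h1
      simpa using h3
    rw [← pow_mul, hnB2, ← pow_mul] at h2
    rw [pow_succ']
    exact h2
  -- show B = 0
  have hBzero : B = 0 := by
    by_contra hne
    have hBpos : 0 < ‖B‖ := norm_pos_iff.mpr hne
    have hfin : ∀ k : ℕ, ‖B‖ ^ (2 ^ (k+1) - 1) * (Nat.factorial (2 ^ (k+1) - 1) : ℝ)
        ≤ ‖C‖ ^ (2 ^ (k+1) - 1) := by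
      intro k
      have hm : 2 ^ (k+1) - 1 + 1 = 2 ^ (k+1) := Nat.succ_pred_eq_of_pos (Nat.two_pow_pos _)
      have hb := hbound (2 ^ (k+1) - 1)
      rw [hm, hpow k] at hb
      have h3 : ‖B‖ ^ (2^(k+1)) = ‖B‖ ^ (2^(k+1) - 1) * ‖B‖ := by
        rw [← pow_succ, hm]
      rw [h3] at hb
      have hfp : (0:ℝ) < (Nat.factorial (2^(k+1)-1) : ℝ) := by exact_mod_cast Nat.factorial_pos _
      nlinarith [hfp]
    have htend : Filter.Tendsto (fun n : ℕ => (‖C‖ / ‖B‖) ^ n / (Nat.factorial n : ℝ))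
        Filter.atTop (nhds 0) := FloorSemiring.tendsto_pow_div_factorial_atTop _
    have hsub : Filter.Tendsto (fun k : ℕ => 2 ^ (k+1) - 1) Filter.atTop Filter.atTop := by
      apply Filter.tendsto_atTop_mono (fun k => ?_) Filter.tendsto_id
      show k ≤ 2 ^ (k + 1) - 1
      have h1 := Nat.lt_two_pow_self (n := k)
      have h2 : 2 ^ k ≤ 2 ^ (k + 1) := Nat.pow_le_pow_right (by norm_num) (by omega)
      omega
    have htend2 := htend.comp hsub
    have hev : ∀ᶠ k in Filter.atTop,
        (‖C‖ / ‖B‖) ^ (2 ^ (k+1) - 1) / (Nat.factorial (2 ^ (k+1) - 1) : ℝ) < 1 := by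
      have := htend2.eventually (eventually_lt_nhds (by norm_num : (0:ℝ) < 1))
      simpa using this
    obtain ⟨k, hk⟩ := hev.exists
    have hfk := hfin k
    set m := 2 ^ (k+1) - 1 with hmm
    have hfactpos : (0:ℝ) < (Nat.factorial m : ℝ) := by exact_mod_cast Nat.factorial_pos m
    have h1 : (Nat.factorial m : ℝ) ≤ (‖C‖ / ‖B‖) ^ m := by
      rw [div_pow, le_div_iff₀ (by positivity)]
      nlinarith [pow_pos hBpos m]
    have h2 : (1:ℝ) ≤ (‖C‖ / ‖B‖) ^ m / (Nat.factorial m : ℝ) := by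
      rw [le_div_iff₀ hfactpos]; linarith
    linarith
  -- conclude
  have heq : adjoint T * T - T * adjoint T = 0 := by
    have h : adjoint T * T - T * adjoint T = B ^ 2 := by rw [hB2, hS]
    rw [h, hBzero]; exact zero_pow (by norm_num)
  rw [heq]
  constructor
  · exact LinearMap.IsSymmetric.zero
  · intro x; simp [reApplyInnerSelf]
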